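/- Let Θ₀ ∈ (-1/√2, -1/√3) and κ ∈ (-1/4, 1/4). Define b = (1/(2Θ₀²))·((1+4κ)(1-Θ₀²) + √((1+4κ)²(1-Θ₀²)² - 16Θ₀⁴κ)). Then b > 0, b + 4κ/b > 0, and -√(4κ+1)/√(4κ + b + 4κ/b + 1) = Θ₀. -/

import Mathlib

theorem stmt_14 (Θ κ b : ℝ)
    (hΘ : Θ ∈ Set.Ioo (-(1 / Real.sqrt 2)) (-(1 / Real.sqrt 3)))
    (hκ : κ ∈ Set.Ioo (-(1/4) : ℝ) (1/4))
    (hb : b = (1 / (2 * Θ^2)) * ((1 + 4*κ) * (1 - Θ^2) +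
        Real.sqrt ((1 + 4*κ)^2 * (1 - Θ^2)^2 - 16 * Θ^4 * κ))) :
    0 < b ∧ 0 < b + 4*κ/b ∧
      -Real.sqrt (4*κ + 1) / Real.sqrt (4*κ + (b + 4*κ/b) + 1) = Θ := by
  obtain ⟨h1, h2⟩ := hΘ
  obtain ⟨hk1, hk2⟩ := hκ
  have s2 : (0:ℝ) < Real.sqrt 2 := Real.sqrt_pos.mpr (by norm_num)
  have s3 : (0:ℝ) < Real.sqrt 3 := Real.sqrt_pos.mpr (by norm_num)
  have hi3 : (0:ℝ) < 1 / Real.sqrt 3 := by positivity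
  have hΘneg : Θ < 0 := by linarith
  have hs2sq : Real.sqrt 2 * Real.sqrt 2 = 2 := Real.mul_self_sqrt (by norm_num)
  have hs3sq : Real.sqrt 3 * Real.sqrt 3 = 3 := Real.mul_self_sqrt (by norm_num)
  have hT0 : 0 < Θ^2 := by nlinarith [hΘneg]
  have hT1 : (1:ℝ)/3 < Θ^2 := by
    have h : 1 / Real.sqrt 3 < -Θ := by linarith
    have h' : 1 < -Θ * Real.sqrt 3 := (div_lt_iff₀ s3).mp h
    nlinarith [h', hs3sq]
  have hT2 : Θ^2 < 1/2 := by
    have h : -Θ < 1 / Real.sqrt 2 := by linarith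
    have h' : -Θ * Real.sqrt 2 < 1 := (lt_div_iff₀ s2).mp h
    nlinarith [h', hs2sq, mul_nonneg (by linarith : (0:ℝ) ≤ -Θ) s2.le]
  have hA : 0 < (1 + 4*κ) * (1 - Θ^2) := mul_pos (by linarith) (by linarith)
  have hD : 0 ≤ (1 + 4*κ)^2 * (1 - Θ^2)^2 - 16 * Θ^4 * κ := by
    nlinarith [mul_nonneg (sq_nonneg (1+4*κ)) (by linarith : (0:ℝ) ≤ 1 - 2*Θ^2),
      mul_nonneg (sq_nonneg (1-4*κ)) (sq_nonneg (Θ^2))]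
  set s := Real.sqrt ((1 + 4*κ)^2 * (1 - Θ^2)^2 - 16 * Θ^4 * κ) with hsdef
  have hs0 : 0 ≤ s := Real.sqrt_nonneg _
  have hs2' : s^2 = (1 + 4*κ)^2 * (1 - Θ^2)^2 - 16 * Θ^4 * κ := Real.sq_sqrt hD
  have hb' : 2 * Θ^2 * b = (1 + 4*κ) * (1 - Θ^2) + s := by
    rw [hb]; field_simp [hΘneg.ne]
  have hbpos : 0 < b := by nlinarith [hb']
  have hkey : Θ^2 * b^2 - (1 + 4*κ) * (1 - Θ^2) * b + 4*κ*Θ^2 = 0 := by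
    have hsq : (2*Θ^2*b - (1 + 4*κ) * (1 - Θ^2))^2
        = (1 + 4*κ)^2 * (1 - Θ^2)^2 - 16 * Θ^4 * κ := by
      rw [show 2*Θ^2*b - (1 + 4*κ) * (1 - Θ^2) = s by linarith, hs2']
    have h4 : (4*Θ^2) * (Θ^2 * b^2 - (1 + 4*κ) * (1 - Θ^2) * b + 4*κ*Θ^2) = 0 := by
      linear_combination hsq
    rcases mul_eq_zero.mp h4 with h | h
    · exfalso; linarith
    · exact h
  have hB : b + 4*κ/b = (1 + 4*κ) * (1 - Θ^2) / Θ^2 := by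
    field_simp [hΘneg.ne, hbpos.ne']
    linear_combination hkey
  refine ⟨hbpos, ?_, ?_⟩
  · rw [hB]; positivity
  · have hBeq : 4*κ + (b + 4*κ/b) + 1 = (4*κ+1)/Θ^2 := by
      rw [hB]; field_simp [hΘneg.ne]; ring
    have hsT : Real.sqrt (Θ^2) = -Θ := by
      rw [show Θ^2 = (-Θ)^2 by ring, Real.sqrt_sq (by linarith)]
    have hs41 : 0 < Real.sqrt (4*κ+1) := Real.sqrt_pos.mpr (by linarith)
    rw [hBeq, Real.sqrt_div (by linarith : (0:ℝ) ≤ 4*κ+1) (Θ^2), hsT]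
    rw [div_div_eq_mul_div]
    field_simp
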